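/- Let x₀ ∈ ℝ², r > 0 and 0 < δ < 1. Let γ : S¹ → ℝ² be a continuous closed curve such that ‖γ(ω) − (x₀ + r ω)‖ ≤ δ r for every ω ∈ S¹. Then every closed half-line emanating from x₀, i.e. every set of the form {x₀ + t e : t ≥ 0} with e a unit vector of ℝ², intersects the image γ(S¹). -/

import Mathlib

open Metric

open Real
open scoped RealInnerProductSpace

noncomputable section

abbrev E2 : Type := EuclideanSpace ℝ (Fin 2)

set_option maxHeartbeats 1000000 in
theorem stmt4 (x₀ : E2) (r δ : ℝ) (hr : 0 < r) (hδ0 : 0 < δ) (hδ1 : δ < 1)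
    (γ : E2 → E2) (hγ : ContinuousOn γ (sphere (0 : E2) 1))
    (hclose : ∀ ω ∈ sphere (0 : E2) 1, ‖γ ω - (x₀ + r • ω)‖ ≤ δ * r) :
    ∀ e : E2, ‖e‖ = 1 →
      ∃ t : ℝ, 0 ≤ t ∧ ∃ ω ∈ sphere (0 : E2) 1, γ ω = x₀ + t • e := by
  intro e he
  set ie : E2 := (EuclideanSpace.equiv (Fin 2) ℝ).symm ![-(e 1), e 0] with hie_def
  have hie0 : ie 0 = -(e 1) := rfl
  have hie1 : ie 1 = e 0 := rfl
  have hee : e 0 * e 0 + e 1 * e 1 = 1 := by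
    have h := he
    rw [EuclideanSpace.norm_eq] at h
    have h2 : (e 0) ^ 2 + (e 1) ^ 2 = 1 := by
      have h3 := congrArg (fun x => x ^ 2) h
      simpa [Real.sq_sqrt, Fin.sum_univ_two, add_nonneg, sq_nonneg] using h3
    nlinarith
  -- inner product computations
  have inner_apply : ∀ x y : E2, ⟪x, y⟫ = x 0 * y 0 + x 1 * y 1 := by
    intro x y
    simp [PiLp.inner_apply, RCLike.inner_apply, Fin.sum_univ_two]
    ring
  have hinner_e_ie : ⟪e, ie⟫ = 0 := by rw [inner_apply, hie0, hie1]; ring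
  have hinner_ee : ⟪e, e⟫ = 1 := by rw [inner_apply]; exact hee
  have hinner_ieie : ⟪ie, ie⟫ = 1 := by rw [inner_apply, hie0, hie1]; nlinarith
  -- the rotating unit vector
  set ω : ℝ → E2 := fun s => Real.cos s • e + Real.sin s • ie with hω_def
  have hω_sphere : ∀ s, ω s ∈ sphere (0 : E2) 1 := by
    intro s
    have h1 : ‖ω s‖ ^ 2 = 1 := by
      rw [← real_inner_self_eq_norm_sq]
      have hie_e : ⟪ie, e⟫ = 0 := by rw [real_inner_comm]; exact hinner_e_ie
      simp only [hω_def, inner_add_add_self, real_inner_smul_left,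
        real_inner_smul_right, hinner_ee, hinner_e_ie, hinner_ieie, hie_e]
      nlinarith [Real.sin_sq_add_cos_sq s]
    have h2 : ‖ω s‖ = 1 := by
      have h3 := Real.sqrt_sq (norm_nonneg (ω s))
      rw [h1, Real.sqrt_one] at h3
      exact h3.symm
    simpa [mem_sphere_iff_norm] using h2
  -- key positivity: the displaced curve points outward
  have hpos : ∀ u : E2, u ∈ sphere (0 : E2) 1 → 0 < ⟪γ u - x₀, u⟫ := by
    intro u hu
    have hnu : ‖u‖ = 1 := by simpa [mem_sphere_iff_norm] using hu
    have hcl := hclose u hu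
    set v : E2 := γ u - x₀ with hv
    have hveq : γ u - (x₀ + r • u) = v - r • u := by
      simp only [hv]; abel
    rw [hveq] at hcl
    have hsq : ‖v - r • u‖ ^ 2 ≤ (δ * r) ^ 2 := by
      have := norm_nonneg (v - r • u)
      nlinarith
    rw [norm_sub_sq_real, real_inner_smul_right, norm_smul, Real.norm_eq_abs,
      abs_of_pos hr, hnu] at hsq
    have hδr1 : δ * r < r := by nlinarith
    have hδr0 : 0 < δ * r := mul_pos hδ0 hr
    have hδr2 : (δ * r) ^ 2 < r ^ 2 := by
      nlinarith [mul_self_lt_mul_self hδr0.le hδr1]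
    have h6 : 0 < 2 * (r * ⟪v, u⟫) := by linarith [sq_nonneg ‖v‖]
    by_contra hc
    push_neg at hc
    have h7 : r * ⟪v, u⟫ ≤ 0 := mul_nonpos_of_nonneg_of_nonpos hr.le hc
    linarith
  -- the sign function along the rotation
  set h : ℝ → ℝ := fun s => ⟪ie, γ (ω s) - x₀⟫ with hh_def
  have hωpi2 : ω (π / 2) = ie := by
    simp [hω_def, Real.cos_pi_div_two, Real.sin_pi_div_two]
  have hωnegpi2 : ω (-(π / 2)) = -ie := by
    simp [hω_def, Real.cos_pi_div_two, Real.sin_pi_div_two]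
  have hpos2 : 0 < h (π / 2) := by
    have h1 := hpos (ω (π / 2)) (hω_sphere _)
    rw [hωpi2] at h1
    simp only [hh_def]
    rw [hωpi2, real_inner_comm]
    exact h1
  have hneg2 : h (-(π / 2)) < 0 := by
    have h1 := hpos (ω (-(π / 2))) (hω_sphere _)
    rw [hωnegpi2] at h1
    have h2 : ⟪γ (-ie) - x₀, -ie⟫ = - ⟪ie, γ (-ie) - x₀⟫ := by
      rw [inner_neg_right, real_inner_comm]
    rw [h2] at h1
    simp only [hh_def]
    rw [hωnegpi2]
    linarith
  -- continuity of h on the interval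
  have hωcont : Continuous ω := by
    simp only [hω_def]
    exact (Real.continuous_cos.smul continuous_const).add
      (Real.continuous_sin.smul continuous_const)
  have hcont : ContinuousOn h (Set.Icc (-(π / 2)) (π / 2)) := by
    have h1 : ContinuousOn (fun s => γ (ω s)) (Set.Icc (-(π / 2)) (π / 2)) :=
      hγ.comp hωcont.continuousOn (fun s _ => hω_sphere s)
    exact continuousOn_const.inner (h1.sub continuousOn_const)
  -- intermediate value theorem
  have hivt : ∃ s ∈ Set.Icc (-(π / 2)) (π / 2), h s = 0 := by
    have hle : -(π / 2) ≤ π / 2 := by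
      have := Real.pi_pos; linarith
    have := intermediate_value_Icc hle hcont
    have h0mem : (0 : ℝ) ∈ Set.Icc (h (-(π / 2))) (h (π / 2)) :=
      ⟨le_of_lt hneg2, le_of_lt hpos2⟩
    obtain ⟨s, hs, hs0⟩ := this h0mem
    exact ⟨s, hs, hs0⟩
  obtain ⟨s₀, hs₀mem, hs₀⟩ := hivt
  -- decompose γ(ω s₀) - x₀ = t • e
  set v : E2 := γ (ω s₀) - x₀ with hv_def
  have hvie : ⟪ie, v⟫ = 0 := hs₀
  have hvie' : -(e 1) * v 0 + e 0 * v 1 = 0 := by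
    rw [inner_apply, hie0, hie1] at hvie; linarith
  set t : ℝ := ⟪e, v⟫ with ht_def
  have ht' : t = e 0 * v 0 + e 1 * v 1 := by rw [ht_def, inner_apply]
  have hvte : v = t • e := by
    ext i
    fin_cases i
    · show v 0 = t * e 0
      linear_combination (-(e 0)) * ht' + (-(e 1)) * hvie' + (-(v 0)) * hee
    · show v 1 = t * e 1
      linear_combination (-(e 1)) * ht' + (e 0) * hvie' + (-(v 1)) * hee
  -- t is positive
  have hpos3 : 0 < ⟪v, ω s₀⟫ := hpos (ω s₀) (hω_sphere s₀)
  have hinner_v_ω : ⟪v, ω s₀⟫ = t * Real.cos s₀ := by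
    rw [hvte]
    simp only [hω_def]
    rw [inner_add_right, real_inner_smul_left, real_inner_smul_left,
      real_inner_smul_right, real_inner_smul_right, hinner_ee, hinner_e_ie]
    ring
  have hcos_nonneg : 0 ≤ Real.cos s₀ :=
    Real.cos_nonneg_of_mem_Icc hs₀mem
  have ht_pos : 0 < t := by
    rw [hinner_v_ω] at hpos3
    nlinarith
  refine ⟨t, le_of_lt ht_pos, ω s₀, hω_sphere s₀, ?_⟩
  have : γ (ω s₀) = x₀ + v := by simp [hv_def]
  rw [this, hvte]
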